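/- Let W be a real random variable with E[W] = 0 and E[W^2] = σ² > 0. Define p(w) := σ^{-2}·E[W·1{W > w}] for w ≥ 0 and p(w) := σ^{-2}·E[(-W)·1{W < w}] for w < 0. Then p is nonnegative and integrates to 1 over the real line, i.e., p is a probability density. -/

import Mathlib

open MeasureTheory

theorem stmt0 {Ω : Type*} [MeasureSpace Ω] [IsProbabilityMeasure (volume : Measure Ω)]
    (W : Ω → ℝ) (σ : ℝ) (hσ : 0 < σ)
    (hW : Measurable W)
    (hint : Integrable (fun ω => (W ω) ^ 2))
    (hmean : ∫ ω, W ω = 0)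
    (hvar : ∫ ω, (W ω) ^ 2 = σ ^ 2)
    (p : ℝ → ℝ)
    (hp : ∀ w : ℝ, p w =
      if 0 ≤ w then σ ^ (-2 : ℤ) * ∫ ω, W ω * Set.indicator {ω | w < W ω} 1 ω
      else σ ^ (-2 : ℤ) * ∫ ω, (-W ω) * Set.indicator {ω | W ω < w} 1 ω) :
    (∀ w, 0 ≤ p w) ∧ ∫ w, p w = 1 := by
  classical
  have hσ2 : (0:ℝ) < σ ^ 2 := by positivity
  have hσz : σ ^ (-2 : ℤ) = (σ ^ 2)⁻¹ := by
    rw [zpow_neg]; norm_cast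
  set G : ℝ → Ω → ℝ := fun w ω =>
    if 0 ≤ w then (if w < W ω then W ω else 0) else (if W ω < w then -W ω else 0) with hG
  have hp' : ∀ w, p w = (σ ^ 2)⁻¹ * ∫ ω, G w ω := by
    intro w
    rw [hp w]
    by_cases h : 0 ≤ w <;>
      simp [hG, h, hσz, Set.indicator_apply, mul_ite, mul_one, mul_zero]
  have hGnn : ∀ w ω, 0 ≤ G w ω := by
    intro w ω
    simp only [hG]
    split_ifs with h1 h2 h3
    · exact le_of_lt (lt_of_le_of_lt h1 h2)
    · exact le_refl 0
    · have := not_le.mp h1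
      linarith
    · exact le_refl 0
  -- measurability of uncurried G
  have hGmeas : Measurable (fun z : ℝ × Ω => G z.1 z.2) := by
    have m1 : MeasurableSet {z : ℝ × Ω | 0 ≤ z.1} :=
      measurableSet_le measurable_const measurable_fst
    have m2 : MeasurableSet {z : ℝ × Ω | z.1 < W z.2} :=
      measurableSet_lt measurable_fst (hW.comp measurable_snd)
    have m3 : MeasurableSet {z : ℝ × Ω | W z.2 < z.1} :=
      measurableSet_lt (hW.comp measurable_snd) measurable_fst
    exact Measurable.ite m1
      (Measurable.ite m2 (hW.comp measurable_snd) measurable_const)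
      (Measurable.ite m3 (hW.comp measurable_snd).neg measurable_const)
  have hGwmeas : ∀ w, Measurable (G w) := by
    intro w
    exact hGmeas.comp (measurable_const.prodMk measurable_id)
  have hWint : Integrable W := by
    have h2 : MemLp W 2 (volume : Measure Ω) :=
      (memLp_two_iff_integrable_sq hW.aestronglyMeasurable).mpr hint
    exact h2.integrable (by norm_num)
  have hGint : ∀ w, Integrable (G w) := by
    intro w
    refine Integrable.mono' hWint.abs (hGwmeas w).aestronglyMeasurable ?_
    refine ae_of_all _ fun ω => ?_
    simp only [hG, Real.norm_eq_abs]
    split_ifs <;> simp [abs_nonneg, le_abs_self, neg_le_abs, abs_neg]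
  have hInner : ∀ w, ENNReal.ofReal (∫ ω, G w ω) = ∫⁻ ω, ENNReal.ofReal (G w ω) :=
    fun w => ofReal_integral_eq_lintegral_ofReal (hGint w) (ae_of_all _ (hGnn w))
  -- slice integral in w
  have hSlice : ∀ ω, (∫⁻ w, ENNReal.ofReal (G w ω)) = ENNReal.ofReal ((W ω) ^ 2) := by
    intro ω
    have heq : (fun w => ENNReal.ofReal (G w ω)) =
        (Set.Ico (0:ℝ) (W ω)).indicator (fun _ => ENNReal.ofReal (W ω)) +
        (Set.Ioo (W ω) (0:ℝ)).indicator (fun _ => ENNReal.ofReal (-W ω)) := by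
      funext w
      simp only [hG, Set.indicator_apply, Set.mem_Ico, Set.mem_Ioo, Pi.add_apply]
      by_cases h0 : 0 ≤ w
      · have hw0 : ¬ w < 0 := not_lt.mpr h0
        by_cases h1 : w < W ω
        · simp [h0, h1, hw0]
        · simp [h0, h1, hw0]
      · have hw0 : w < 0 := not_le.mp h0
        by_cases h2 : W ω < w
        · simp [h0, h2, hw0]
        · simp [h0, h2, hw0]
    have heq' : (∫⁻ w, ENNReal.ofReal (G w ω)) =
        ∫⁻ w, ((Set.Ico (0:ℝ) (W ω)).indicator (fun _ => ENNReal.ofReal (W ω)) w +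
          (Set.Ioo (W ω) (0:ℝ)).indicator (fun _ => ENNReal.ofReal (-W ω)) w) :=
      lintegral_congr fun w => congrFun heq w
    rw [heq', lintegral_add_left (measurable_const.indicator measurableSet_Ico),
      lintegral_indicator_const measurableSet_Ico,
      lintegral_indicator_const measurableSet_Ioo,
      Real.volume_Ico, Real.volume_Ioo]
    rcases le_or_gt (W ω) 0 with h | h
    · have : ENNReal.ofReal (W ω) = 0 := ENNReal.ofReal_eq_zero.mpr h
      rw [this, zero_mul, zero_add, ← ENNReal.ofReal_mul (by linarith)]
      congr 1; ring
    · have : ENNReal.ofReal (0 - W ω) = 0 := ENNReal.ofReal_eq_zero.mpr (by linarith)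
      rw [this, mul_zero, add_zero, ← ENNReal.ofReal_mul (le_of_lt h)]
      congr 1; ring
  have hswap : (∫⁻ w, ∫⁻ ω, ENNReal.ofReal (G w ω)) = ∫⁻ ω, ∫⁻ w, ENNReal.ofReal (G w ω) := by
    exact lintegral_lintegral_swap (ENNReal.measurable_ofReal.comp hGmeas).aemeasurable
  have hRHS : (∫⁻ ω, ∫⁻ w, ENNReal.ofReal (G w ω)) = ENNReal.ofReal (σ ^ 2) := by
    calc (∫⁻ ω, ∫⁻ w, ENNReal.ofReal (G w ω))
        = ∫⁻ ω, ENNReal.ofReal ((W ω) ^ 2) := by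
          congr 1; funext ω; exact hSlice ω
      _ = ENNReal.ofReal (∫ ω, (W ω) ^ 2) :=
          (ofReal_integral_eq_lintegral_ofReal hint (ae_of_all _ fun ω => sq_nonneg _)).symm
      _ = ENNReal.ofReal (σ ^ 2) := by rw [hvar]
  have hIG : ∀ w, (∫ ω, G w ω) = σ ^ 2 * p w := by
    intro w
    rw [hp' w]
    field_simp
  have hLHS : (∫⁻ w, ∫⁻ ω, ENNReal.ofReal (G w ω)) =
      ENNReal.ofReal (σ ^ 2) * ∫⁻ w, ENNReal.ofReal (p w) := by
    rw [← lintegral_const_mul' _ _ ENNReal.ofReal_ne_top]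
    congr 1
    funext w
    rw [← hInner w, hIG w, ENNReal.ofReal_mul (le_of_lt hσ2)]
  have hkey : (∫⁻ w, ENNReal.ofReal (p w)) = 1 := by
    have h1 : ENNReal.ofReal (σ ^ 2) * ∫⁻ w, ENNReal.ofReal (p w)
        = ENNReal.ofReal (σ ^ 2) * 1 := by
      rw [mul_one, ← hLHS, hswap, hRHS]
    have hne : ENNReal.ofReal (σ ^ 2) ≠ 0 := by
      simp [ENNReal.ofReal_eq_zero, not_le, hσ2, hσ.ne']
    exact (ENNReal.mul_right_inj hne ENNReal.ofReal_ne_top).mp h1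
  have hpnn : ∀ w, 0 ≤ p w := by
    intro w
    rw [hp' w]
    exact mul_nonneg (inv_nonneg.mpr (le_of_lt hσ2))
      (integral_nonneg (hGnn w))
  refine ⟨hpnn, ?_⟩
  have hpmeas : Measurable p := by
    have hlm : Measurable fun w => ∫⁻ ω, ENNReal.ofReal (G w ω) :=
      Measurable.lintegral_prod_right (ENNReal.measurable_ofReal.comp hGmeas)
    have : p = fun w => (σ ^ 2)⁻¹ * (∫⁻ ω, ENNReal.ofReal (G w ω)).toReal := by
      funext w
      rw [hp' w, ← hInner w, ENNReal.toReal_ofReal (integral_nonneg (hGnn w))]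
    rw [this]
    exact (hlm.ennreal_toReal).const_mul _
  rw [integral_eq_lintegral_of_nonneg_ae (ae_of_all _ hpnn) hpmeas.aestronglyMeasurable,
    hkey]
  simp
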